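/- Let n = 2, 0 < α < β, and R_* > 0. Define η_R(x) = 1/2 for |x| ≤ √R, η_R(x) = (log R - log|x|)/log R for √R < |x| < R, and η_R(x) = 0 for |x| ≥ R. Then for R large, ∬_{{(x,y) : √R < |x| < R, |x-y| ≤ R_*}} (η_R(x) - η_R(y))²·|x-y|^(β-2-n-α) dx dy ≤ C·R_*^(β-α)/((β-α)·log R), with C independent of R. -/

import Mathlib

open MeasureTheory Set Metric
open scoped ENNReal

lemma aux_int {p : ℝ} (hp : -2 < p) {r : ℝ} (hr : 0 < r) :
    IntegrableOn (fun z : EuclideanSpace ℝ (Fin 2) => ‖z‖ ^ p) (closedBall 0 r) := by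
  have hmeas : Measurable (fun z : EuclideanSpace ℝ (Fin 2) => ‖z‖ ^ p) := by fun_prop
  rcases le_or_gt 0 p with hp0 | hp0
  · refine ⟨hmeas.aestronglyMeasurable, HasFiniteIntegral.restrict_of_bounded
      (C := r ^ p) measure_closedBall_lt_top ?_⟩
    refine (ae_restrict_iff' measurableSet_closedBall).2 (ae_of_all _ fun z hz => ?_)
    rw [Real.norm_eq_abs, abs_of_nonneg (Real.rpow_nonneg (norm_nonneg _) _)]
    exact Real.rpow_le_rpow (norm_nonneg _) (mem_closedBall_zero_iff.1 hz) hp0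
  · refine ⟨hmeas.aestronglyMeasurable, ?_⟩
    rw [hasFiniteIntegral_iff_ofReal (ae_of_all _ fun z =>
      Real.rpow_nonneg (norm_nonneg _) _)]
    rw [lintegral_eq_lintegral_meas_le _ (ae_of_all _ fun z =>
      Real.rpow_nonneg (norm_nonneg _) _) hmeas.aemeasurable]
    set μ' := volume.restrict (closedBall (0 : EuclideanSpace ℝ (Fin 2)) r) with hμ'
    have hsub : ∀ t : ℝ, 0 < t → {z : EuclideanSpace ℝ (Fin 2) | t ≤ ‖z‖ ^ p} ⊆
        closedBall 0 (t ^ p⁻¹) := by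
      intro t ht z hz
      simp only [mem_setOf_eq] at hz
      rcases eq_or_ne z 0 with rfl | hz0
      · simp [Real.zero_rpow hp0.ne] at hz; linarith
      · have hz' : 0 < ‖z‖ := norm_pos_iff.2 hz0
        rw [mem_closedBall_zero_iff]
        exact (Real.le_rpow_inv_iff_of_neg hz' ht hp0).2 hz
    have key : ∀ t ∈ Ioi (1:ℝ), μ' {z | t ≤ ‖z‖ ^ p} ≤
        ENNReal.ofReal (t ^ (p⁻¹ * 2)) * volume (ball (0 : EuclideanSpace ℝ (Fin 2)) 1) := by
      intro t ht
      have ht0 : (0:ℝ) < t := lt_trans one_pos ht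
      calc μ' {z | t ≤ ‖z‖ ^ p} ≤ volume (closedBall (0 : EuclideanSpace ℝ (Fin 2)) (t ^ p⁻¹)) :=
            le_trans (Measure.restrict_le_self _) (measure_mono (hsub t ht0))
        _ = ENNReal.ofReal ((t ^ p⁻¹) ^ Module.finrank ℝ (EuclideanSpace ℝ (Fin 2))) *
            volume (ball (0 : EuclideanSpace ℝ (Fin 2)) 1) :=
            Measure.addHaar_closedBall _ _ (Real.rpow_nonneg ht0.le _)
        _ = ENNReal.ofReal (t ^ (p⁻¹ * 2)) * volume (ball (0 : EuclideanSpace ℝ (Fin 2)) 1) := by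
            rw [finrank_euclideanSpace_fin, ← Real.rpow_natCast (t ^ p⁻¹) 2,
              ← Real.rpow_mul ht0.le]
            norm_num
    have hq : p⁻¹ * 2 < -1 := by
      have : (2:ℝ) / p < -1 := by
        rw [div_lt_iff_of_neg hp0]; linarith
      linarith [this, (by ring : p⁻¹ * 2 = 2 / p)]
    calc ∫⁻ t in Ioi (0:ℝ), μ' {z | t ≤ ‖z‖ ^ p}
        ≤ ∫⁻ t in Ioc (0:ℝ) 1 ∪ Ioi 1, μ' {z | t ≤ ‖z‖ ^ p} :=
          lintegral_mono_set Ioi_subset_Ioc_union_Ioi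
      _ ≤ (∫⁻ t in Ioc (0:ℝ) 1, μ' {z | t ≤ ‖z‖ ^ p}) +
          ∫⁻ t in Ioi (1:ℝ), μ' {z | t ≤ ‖z‖ ^ p} := lintegral_union_le _ _ _
      _ < ∞ := by
        refine ENNReal.add_lt_top.2 ⟨?_, ?_⟩
        · calc ∫⁻ t in Ioc (0:ℝ) 1, μ' {z | t ≤ ‖z‖ ^ p}
              ≤ ∫⁻ _ in Ioc (0:ℝ) 1, volume (closedBall (0 : EuclideanSpace ℝ (Fin 2)) r) :=
                lintegral_mono fun t => (measure_mono (subset_univ _)).trans_eq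
                  (Measure.restrict_apply_univ _)
            _ = volume (closedBall (0 : EuclideanSpace ℝ (Fin 2)) r) * volume (Ioc (0:ℝ) 1) := by
                rw [setLIntegral_const]
            _ < ∞ := by
                refine ENNReal.mul_lt_top measure_closedBall_lt_top ?_
                simp [Real.volume_Ioc]
        · calc ∫⁻ t in Ioi (1:ℝ), μ' {z | t ≤ ‖z‖ ^ p}
              ≤ ∫⁻ t in Ioi (1:ℝ), ENNReal.ofReal (t ^ (p⁻¹ * 2)) *
                  volume (ball (0 : EuclideanSpace ℝ (Fin 2)) 1) :=
                setLIntegral_mono' measurableSet_Ioi key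
            _ = (∫⁻ t in Ioi (1:ℝ), ENNReal.ofReal (t ^ (p⁻¹ * 2))) *
                  volume (ball (0 : EuclideanSpace ℝ (Fin 2)) 1) :=
                lintegral_mul_const' _ _ measure_ball_lt_top.ne
            _ < ∞ := ENNReal.mul_lt_top
                ((integrableOn_Ioi_rpow_of_lt hq one_pos).setLIntegral_lt_top)
                measure_ball_lt_top

lemma log_sub_le {a b : ℝ} (ha : 0 < a) (hb : 0 < b) (h : b ≤ a) :
    Real.log a - Real.log b ≤ (a - b) / b := by
  have h1 := Real.log_le_sub_one_of_pos (div_pos ha hb)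
  rw [Real.log_div ha.ne' hb.ne'] at h1
  have : a / b - 1 = (a - b) / b := by field_simp
  linarith [this ▸ h1]

lemma abs_log_sub_le {a b : ℝ} (ha : 0 < a) (hb : 0 < b) (hba : a / 2 ≤ b) :
    |Real.log a - Real.log b| ≤ 2 * |a - b| / a := by
  rcases le_total b a with h | h
  · rw [abs_of_nonneg (by linarith [Real.log_le_log hb h] : (0:ℝ) ≤ Real.log a - Real.log b),
      abs_of_nonneg (by linarith : (0:ℝ) ≤ a - b)]
    calc Real.log a - Real.log b ≤ (a - b) / b := log_sub_le ha hb h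
      _ ≤ 2 * (a - b) / a := by
          rw [div_le_div_iff₀ hb (by linarith)]
          nlinarith
  · rw [abs_of_nonpos (by linarith [Real.log_le_log ha h] : Real.log a - Real.log b ≤ 0),
      abs_of_nonpos (by linarith : a - b ≤ 0), neg_sub, neg_sub]
    calc Real.log b - Real.log a ≤ (b - a) / a := log_sub_le hb ha h
      _ ≤ 2 * (b - a) / a := by
          rw [div_le_div_iff₀ ha ha]
          nlinarith

lemma eta_abs_bound (R a b : ℝ) (hR : 1 < R) (ha1 : Real.sqrt R < a) (ha2 : a < R)
    (hb : 0 < b) :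
    |(Real.log R - Real.log a) / Real.log R -
      (if b ≤ Real.sqrt R then 1/2 else if b < R then (Real.log R - Real.log b)/Real.log R else 0)|
      ≤ |Real.log a - Real.log b| / Real.log R := by
  have hR0 : (0:ℝ) < R := lt_trans zero_lt_one hR
  have hlogR : 0 < Real.log R := Real.log_pos hR
  have hsq : Real.log (Real.sqrt R) = Real.log R / 2 := Real.log_sqrt hR0.le
  have hsqpos : (0:ℝ) < Real.sqrt R := Real.sqrt_pos.2 hR0
  have ha0 : 0 < a := lt_trans hsqpos ha1
  have hla : Real.log (Real.sqrt R) ≤ Real.log a := Real.log_le_log hsqpos ha1.le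
  have hla2 : Real.log a ≤ Real.log R := Real.log_le_log ha0 ha2.le
  split_ifs with h1 h2
  · -- b ≤ √R
    have hlb : Real.log b ≤ Real.log (Real.sqrt R) := Real.log_le_log hb h1
    have he : (Real.log R - Real.log a) / Real.log R - 1/2
        = (Real.log (Real.sqrt R) - Real.log a) / Real.log R := by
      rw [hsq]; field_simp; ring
    rw [he, abs_div, abs_of_pos hlogR, div_le_div_iff_of_pos_right hlogR]
    rw [abs_of_nonpos (by linarith), abs_of_nonneg (by linarith)]
    linarith
  · -- √R < b < R
    have he : (Real.log R - Real.log a) / Real.log R - (Real.log R - Real.log b) / Real.log R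
        = (Real.log b - Real.log a) / Real.log R := by field_simp; ring
    rw [he, abs_div, abs_of_pos hlogR, abs_sub_comm]
  · -- R ≤ b
    have hlb : Real.log R ≤ Real.log b := Real.log_le_log hR0 (by linarith)
    rw [sub_zero, abs_div, abs_of_pos hlogR, div_le_div_iff_of_pos_right hlogR]
    rw [abs_of_nonneg (by linarith), abs_sub_comm, abs_of_nonneg (by linarith)]
    linarith

lemma annulus_int (R : ℝ) (hR : 1 < R) :
    ∫ x in {x : EuclideanSpace ℝ (Fin 2) | Real.sqrt R < ‖x‖ ∧ ‖x‖ < R}, ‖x‖ ^ (-2 : ℝ)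
      = (volume (ball (0 : EuclideanSpace ℝ (Fin 2)) 1)).toReal * Real.log R := by
  have hR0 : (0:ℝ) < R := lt_trans zero_lt_one hR
  have hsqpos : (0:ℝ) < Real.sqrt R := Real.sqrt_pos.2 hR0
  have hsq1 : (1:ℝ) < Real.sqrt R := by
    have := Real.sqrt_lt_sqrt zero_le_one hR
    rwa [Real.sqrt_one] at this
  have hsqlt : Real.sqrt R < R := by
    nlinarith [Real.sq_sqrt hR0.le]
  set F : ℝ → ℝ := fun r => if Real.sqrt R < r ∧ r < R then r ^ (-2:ℝ) else 0 with hF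
  have hS : MeasurableSet {x : EuclideanSpace ℝ (Fin 2) | Real.sqrt R < ‖x‖ ∧ ‖x‖ < R} :=
    (measurableSet_lt measurable_const measurable_norm).inter
      (measurableSet_lt measurable_norm measurable_const)
  have step1 : ∫ x in {x : EuclideanSpace ℝ (Fin 2) | Real.sqrt R < ‖x‖ ∧ ‖x‖ < R},
      ‖x‖ ^ (-2 : ℝ) = ∫ x : EuclideanSpace ℝ (Fin 2), F ‖x‖ := by
    rw [← integral_indicator hS]
    congr 1
    funext x
    by_cases hx : Real.sqrt R < ‖x‖ ∧ ‖x‖ < R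
    · simp [Set.indicator_apply, hx, hF]
    · simp [Set.indicator_apply, hx, hF]
  rw [step1, integral_fun_norm_addHaar (volume : Measure (EuclideanSpace ℝ (Fin 2))) F]
  simp only [finrank_euclideanSpace_fin]
  have step2 : ∫ y in Ioi (0:ℝ), y ^ (2 - 1) • F y = Real.log R / 2 := by
    have hcong : ∀ y : ℝ, y ^ (2-1) • F y = (Ioo (Real.sqrt R) R).indicator (fun y => y⁻¹) y := by
      intro y
      by_cases hy : Real.sqrt R < y ∧ y < R
      · have hy0 : 0 < y := lt_trans hsqpos hy.1
        have hFy : F y = y ^ (-2:ℝ) := if_pos hy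
        have h2 : y ^ (-2:ℝ) = (y ^ 2)⁻¹ := by
          rw [← Real.rpow_natCast y 2, ← Real.rpow_neg hy0.le]
          norm_num
        rw [hFy, h2, Set.indicator_of_mem (mem_Ioo.2 hy), pow_one, smul_eq_mul]
        field_simp
      · simp [Set.indicator_apply, mem_Ioo, hy, hF]
    rw [setIntegral_congr_fun measurableSet_Ioi (fun y _ => hcong y)]
    rw [integral_indicator measurableSet_Ioo]
    rw [Measure.restrict_restrict measurableSet_Ioo]
    have : Ioo (Real.sqrt R) R ∩ Ioi 0 = Ioo (Real.sqrt R) R := by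
      rw [inter_eq_left]
      exact fun y hy => lt_trans hsqpos hy.1
    rw [this, ← integral_Ioc_eq_integral_Ioo, ← intervalIntegral.integral_of_le hsqlt.le]
    rw [integral_inv_of_pos hsqpos hR0]
    rw [Real.log_div hR0.ne' hsqpos.ne', Real.log_sqrt hR0.le]
    ring
  rw [step2, nsmul_eq_mul, smul_eq_mul]
  rw [measureReal_def]; ring


theorem stmt_17 (α β Rs : ℝ) (hα : 0 < α) (hαβ : α < β) (hRs : 0 < Rs) :
    ∃ C > 0, ∃ R₀ : ℝ, ∀ R : ℝ, R₀ ≤ R →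
      let η : EuclideanSpace ℝ (Fin 2) → ℝ := fun x =>
        if ‖x‖ ≤ Real.sqrt R then 1 / 2
        else if ‖x‖ < R then (Real.log R - Real.log ‖x‖) / Real.log R
        else 0
      (∫ x in {x : EuclideanSpace ℝ (Fin 2) | Real.sqrt R < ‖x‖ ∧ ‖x‖ < R},
        ∫ y in {y : EuclideanSpace ℝ (Fin 2) | ‖x - y‖ ≤ Rs},
          (η x - η y) ^ 2 * ‖x - y‖ ^ (β - 2 - 2 - α)) ≤
        C * Rs ^ (β - α) / ((β - α) * Real.log R) := by
  have hβα : 0 < β - α := sub_pos.2 hαβ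
  set G : EuclideanSpace ℝ (Fin 2) → ℝ :=
    fun z => if ‖z‖ ≤ Rs then ‖z‖ ^ (β - α - 2) else 0 with hG
  have hGnonneg : ∀ z, 0 ≤ G z := by
    intro z; rw [hG]; dsimp only
    split_ifs
    · exact Real.rpow_nonneg (norm_nonneg _) _
    · exact le_refl 0
  have hGint : Integrable G := by
    have hGeq : G = (closedBall (0 : EuclideanSpace ℝ (Fin 2)) Rs).indicator
        (fun z => ‖z‖ ^ (β - α - 2)) := by
      funext z
      by_cases h : ‖z‖ ≤ Rs <;>
        simp [Set.indicator_apply, mem_closedBall_zero_iff, h, hG]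
    rw [hGeq, integrable_indicator_iff measurableSet_closedBall]
    exact aux_int (by linarith) hRs
  set B := ∫ z, G z with hB
  have hB0 : 0 ≤ B := integral_nonneg hGnonneg
  set V := (volume (ball (0 : EuclideanSpace ℝ (Fin 2)) 1)).toReal with hV
  have hV0 : 0 ≤ V := ENNReal.toReal_nonneg
  refine ⟨4 * B * V * (β - α) / Rs ^ (β - α) + 1, by positivity, max 3 (4 * Rs ^ 2),
    fun R hRR => ?_⟩
  intro η
  have hη : η = fun x : EuclideanSpace ℝ (Fin 2) =>
      if ‖x‖ ≤ Real.sqrt R then 1 / 2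
      else if ‖x‖ < R then (Real.log R - Real.log ‖x‖) / Real.log R
      else 0 := rfl
  have hR3 : (3:ℝ) ≤ R := le_trans (le_max_left _ _) hRR
  have hR1 : (1:ℝ) < R := by linarith
  have hR0 : (0:ℝ) < R := by linarith
  have hlogR : 0 < Real.log R := Real.log_pos hR1
  have hsqpos : (0:ℝ) < Real.sqrt R := Real.sqrt_pos.2 hR0
  have hsq2Rs : 2 * Rs ≤ Real.sqrt R := by
    have h4 : 4 * Rs ^ 2 ≤ R := le_trans (le_max_right _ _) hRR
    have : Real.sqrt (4 * Rs ^ 2) ≤ Real.sqrt R := Real.sqrt_le_sqrt h4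
    rwa [show (4 : ℝ) * Rs ^ 2 = (2 * Rs) ^ 2 by ring,
      Real.sqrt_sq (by positivity)] at this
  have hS : MeasurableSet {x : EuclideanSpace ℝ (Fin 2) | Real.sqrt R < ‖x‖ ∧ ‖x‖ < R} :=
    (measurableSet_lt measurable_const measurable_norm).inter
      (measurableSet_lt measurable_norm measurable_const)
  -- pointwise bound
  have key : ∀ x ∈ {x : EuclideanSpace ℝ (Fin 2) | Real.sqrt R < ‖x‖ ∧ ‖x‖ < R},
      ∀ y : EuclideanSpace ℝ (Fin 2), ‖x - y‖ ≤ Rs →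
      (η x - η y) ^ 2 * ‖x - y‖ ^ (β - 2 - 2 - α) ≤
        4 / (‖x‖ ^ 2 * Real.log R ^ 2) * G (x - y) := by
    intro x hx y hxy
    have hx1 : Real.sqrt R < ‖x‖ := hx.1
    have hx2 : ‖x‖ < R := hx.2
    have hx0 : 0 < ‖x‖ := lt_trans hsqpos hx1
    have hy2 : ‖x‖ / 2 ≤ ‖y‖ := by
      have h1 : ‖x‖ - ‖y‖ ≤ ‖x - y‖ := norm_sub_norm_le x y
      have h2 : Rs ≤ Real.sqrt R / 2 := by linarith
      have h3 : Real.sqrt R / 2 ≤ ‖x‖ / 2 := by linarith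
      linarith
    have hy0 : 0 < ‖y‖ := lt_of_lt_of_le (by linarith) hy2
    have hηx : η x = (Real.log R - Real.log ‖x‖) / Real.log R := by
      simp only [hη]
      rw [if_neg (not_le.2 hx1), if_pos hx2]
    have habs : |η x - η y| ≤ 2 * ‖x - y‖ / ‖x‖ / Real.log R := by
      have e1 : |η x - η y| ≤ |Real.log ‖x‖ - Real.log ‖y‖| / Real.log R := by
        rw [hηx, hη]
        exact eta_abs_bound R ‖x‖ ‖y‖ hR1 hx1 hx2 hy0
      have e2 : |Real.log ‖x‖ - Real.log ‖y‖| ≤ 2 * |‖x‖ - ‖y‖| / ‖x‖ :=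
        abs_log_sub_le hx0 hy0 hy2
      have e3 : |‖x‖ - ‖y‖| ≤ ‖x - y‖ := abs_norm_sub_norm_le x y
      calc |η x - η y| ≤ |Real.log ‖x‖ - Real.log ‖y‖| / Real.log R := e1
        _ ≤ (2 * |‖x‖ - ‖y‖| / ‖x‖) / Real.log R := by gcongr
        _ ≤ (2 * ‖x - y‖ / ‖x‖) / Real.log R := by gcongr
    have hGxy : G (x - y) = ‖x - y‖ ^ (β - α - 2) := if_pos hxy
    by_cases hxeq : x = y
    · rw [hxeq, sub_self, zero_pow (by norm_num), zero_mul]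
      exact mul_nonneg (by positivity) (hGnonneg _)
    · have hnorm : 0 < ‖x - y‖ := norm_pos_iff.2 (sub_ne_zero.2 hxeq)
      calc (η x - η y) ^ 2 * ‖x - y‖ ^ (β - 2 - 2 - α)
          ≤ (2 * ‖x - y‖ / ‖x‖ / Real.log R) ^ 2 * ‖x - y‖ ^ (β - 2 - 2 - α) := by
            apply mul_le_mul_of_nonneg_right ?_ (Real.rpow_nonneg (norm_nonneg _) _)
            rw [← sq_abs]
            exact pow_le_pow_left₀ (abs_nonneg _) habs 2
        _ = 4 / (‖x‖ ^ 2 * Real.log R ^ 2) * (‖x - y‖ ^ 2 * ‖x - y‖ ^ (β - 2 - 2 - α)) := by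
            ring
        _ = 4 / (‖x‖ ^ 2 * Real.log R ^ 2) * G (x - y) := by
            rw [hGxy]
            congr 1
            rw [← Real.rpow_natCast (‖x - y‖) 2, ← Real.rpow_add hnorm]
            congr 1
            push_cast
            ring
  -- inner integral bound
  have inner : ∀ x ∈ {x : EuclideanSpace ℝ (Fin 2) | Real.sqrt R < ‖x‖ ∧ ‖x‖ < R},
      (∫ y in {y : EuclideanSpace ℝ (Fin 2) | ‖x - y‖ ≤ Rs},
        (η x - η y) ^ 2 * ‖x - y‖ ^ (β - 2 - 2 - α)) ≤
      4 / (‖x‖ ^ 2 * Real.log R ^ 2) * B := by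
    intro x hx
    have hTmeas : MeasurableSet {y : EuclideanSpace ℝ (Fin 2) | ‖x - y‖ ≤ Rs} :=
      measurableSet_le (by fun_prop) measurable_const
    have hint : Integrable (fun y => 4 / (‖x‖ ^ 2 * Real.log R ^ 2) * G (x - y)) :=
      (hGint.comp_sub_left x).const_mul _
    calc (∫ y in {y : EuclideanSpace ℝ (Fin 2) | ‖x - y‖ ≤ Rs},
          (η x - η y) ^ 2 * ‖x - y‖ ^ (β - 2 - 2 - α))
        ≤ ∫ y in {y : EuclideanSpace ℝ (Fin 2) | ‖x - y‖ ≤ Rs},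
            4 / (‖x‖ ^ 2 * Real.log R ^ 2) * G (x - y) := by
          refine integral_mono_of_nonneg (ae_of_all _ fun y =>
              mul_nonneg (sq_nonneg _) (Real.rpow_nonneg (norm_nonneg _) _))
            hint.integrableOn ?_
          exact (ae_restrict_iff' hTmeas).2 (ae_of_all _ fun y hy => key x hx y hy)
      _ ≤ ∫ y, 4 / (‖x‖ ^ 2 * Real.log R ^ 2) * G (x - y) :=
          setIntegral_le_integral hint (ae_of_all _ fun y =>
            mul_nonneg (by positivity) (hGnonneg _))
      _ = 4 / (‖x‖ ^ 2 * Real.log R ^ 2) * B := by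
          rw [integral_const_mul, hB]
          congr 1
          exact integral_sub_left_eq_self G volume x
  -- outer integral
  have hdomint : IntegrableOn (fun x : EuclideanSpace ℝ (Fin 2) =>
      4 * B / Real.log R ^ 2 * ‖x‖ ^ (-2 : ℝ))
      {x : EuclideanSpace ℝ (Fin 2) | Real.sqrt R < ‖x‖ ∧ ‖x‖ < R} := by
    refine ⟨(by fun_prop : Measurable fun x : EuclideanSpace ℝ (Fin 2) =>
        4 * B / Real.log R ^ 2 * ‖x‖ ^ (-2 : ℝ)).aestronglyMeasurable, ?_⟩
    refine HasFiniteIntegral.restrict_of_bounded (C := |4 * B / Real.log R ^ 2|)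
      (lt_of_le_of_lt (measure_mono fun x hx => mem_ball_zero_iff.2 hx.2)
        measure_ball_lt_top) ?_
    refine (ae_restrict_iff' hS).2 (ae_of_all _ fun x hx => ?_)
    rw [norm_mul, Real.norm_eq_abs, Real.norm_eq_abs,
      abs_of_nonneg (Real.rpow_nonneg (norm_nonneg _) _)]
    have hx1 : (1:ℝ) ≤ ‖x‖ := by
      have : (1:ℝ) < Real.sqrt R := by
        have := Real.sqrt_lt_sqrt zero_le_one hR1
        rwa [Real.sqrt_one] at this
      linarith [hx.1]
    calc |4 * B / Real.log R ^ 2| * ‖x‖ ^ (-2:ℝ)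
        ≤ |4 * B / Real.log R ^ 2| * 1 :=
          mul_le_mul_of_nonneg_left
            (Real.rpow_le_one_of_one_le_of_nonpos hx1 (by norm_num)) (abs_nonneg _)
      _ = |4 * B / Real.log R ^ 2| := mul_one _
  have outer : (∫ x in {x : EuclideanSpace ℝ (Fin 2) | Real.sqrt R < ‖x‖ ∧ ‖x‖ < R},
      ∫ y in {y : EuclideanSpace ℝ (Fin 2) | ‖x - y‖ ≤ Rs},
        (η x - η y) ^ 2 * ‖x - y‖ ^ (β - 2 - 2 - α)) ≤
      ∫ x in {x : EuclideanSpace ℝ (Fin 2) | Real.sqrt R < ‖x‖ ∧ ‖x‖ < R},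
        4 * B / Real.log R ^ 2 * ‖x‖ ^ (-2 : ℝ) := by
    refine integral_mono_of_nonneg (ae_of_all _ fun x => integral_nonneg fun y =>
        mul_nonneg (sq_nonneg _) (Real.rpow_nonneg (norm_nonneg _) _))
      hdomint ?_
    refine (ae_restrict_iff' hS).2 (ae_of_all _ fun x hx => ?_)
    refine le_trans (inner x hx) (le_of_eq ?_)
    have hx0 : 0 < ‖x‖ := lt_trans hsqpos hx.1
    have h2 : ‖x‖ ^ (-2:ℝ) = (‖x‖ ^ 2)⁻¹ := by
      rw [← Real.rpow_natCast ‖x‖ 2, ← Real.rpow_neg (norm_nonneg _)]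
      norm_num
    simp only []
    rw [h2]
    field_simp
  rw [← hV] at *
  calc (∫ x in {x : EuclideanSpace ℝ (Fin 2) | Real.sqrt R < ‖x‖ ∧ ‖x‖ < R},
      ∫ y in {y : EuclideanSpace ℝ (Fin 2) | ‖x - y‖ ≤ Rs},
        (η x - η y) ^ 2 * ‖x - y‖ ^ (β - 2 - 2 - α))
      ≤ ∫ x in {x : EuclideanSpace ℝ (Fin 2) | Real.sqrt R < ‖x‖ ∧ ‖x‖ < R},
          4 * B / Real.log R ^ 2 * ‖x‖ ^ (-2 : ℝ) := outer
    _ = 4 * B / Real.log R ^ 2 * (V * Real.log R) := by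
        rw [integral_const_mul, annulus_int R hR1, ← hV]
    _ ≤ (4 * B * V * (β - α) / Rs ^ (β - α) + 1) * Rs ^ (β - α) / ((β - α) * Real.log R) := by
        have hRspos : (0:ℝ) < Rs ^ (β - α) := Real.rpow_pos_of_pos hRs _
        have hCRs : (4 * B * V * (β - α) / Rs ^ (β - α) + 1) * Rs ^ (β - α)
            = 4 * B * V * (β - α) + Rs ^ (β - α) := by
          field_simp
        rw [hCRs]
        have hlhs : 4 * B / Real.log R ^ 2 * (V * Real.log R) = 4 * B * V / Real.log R := by
          field_simp
        rw [hlhs, div_le_div_iff₀ hlogR (by positivity)]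
        nlinarith [mul_nonneg (mul_nonneg (mul_nonneg (by norm_num : (0:ℝ) ≤ 4) hB0) hV0) hβα.le,
          mul_pos hRspos hlogR]
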